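/- Let m > 0, let O, v_O, ω : ℝ → ℝ³ be differentiable with O'(t) = v_O(t), and define A(t,x) = m (v_O(t) + ω(t) × (x − O(t))), φ(t,x) = ‖A(t,x)‖²/(2m), E(t,x) = (∇_x φ(t,·))(x) − ∂A/∂t(t,x), and B(t,x) = (∇ × A(t,·))(x). Then for all t ∈ ℝ, x ∈ ℝ³ and every velocity v ∈ ℝ³, E(t,x) + v × B(t,x) = −m [ v_O'(t) + ω'(t) × (x − O(t)) + ω(t) × (ω(t) × (x − O(t))) ] − 2m ω(t) × v; that is, the Lorentz-type force E + v × B derived from the generalized potential U = φ + A · v equals the sum of the dragging force F_τ = −m a_τ and the Coriolis force F_c = −2m ω × v. -/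

import Mathlib

noncomputable section
open scoped RealInnerProductSpace

/-- Euclidean 3-space. -/
abbrev E3 : Type := EuclideanSpace ℝ (Fin 3)

/-- Constructor for vectors in `E3` from three coordinates. -/
def vec3 (a b c : ℝ) : E3 := (WithLp.equiv 2 (Fin 3 → ℝ)).symm ![a, b, c]

/-- The cross product on `E3`. -/
def cross3 (a b : E3) : E3 :=
  vec3 (a 1 * b 2 - a 2 * b 1) (a 2 * b 0 - a 0 * b 2) (a 0 * b 1 - a 1 * b 0)

/-- `pderiv3 F j x i` is the partial derivative `∂_j F_i` at `x`. -/
def pderiv3 (F : E3 → E3) (j : Fin 3) (x : E3) (i : Fin 3) : ℝ :=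
  fderiv ℝ F x (EuclideanSpace.single j 1) i

/-- The curl `∇ × F` of a vector field on `E3`:
`(∇×F)_1 = ∂_2 F_3 − ∂_3 F_2`, `(∇×F)_2 = ∂_3 F_1 − ∂_1 F_3`, `(∇×F)_3 = ∂_1 F_2 − ∂_2 F_1`
(written here with 0-based indices). -/
def curl3 (F : E3 → E3) (x : E3) : E3 :=
  vec3 (pderiv3 F 1 x 2 - pderiv3 F 2 x 1)
       (pderiv3 F 2 x 0 - pderiv3 F 0 x 2)
       (pderiv3 F 0 x 1 - pderiv3 F 1 x 0)

/-- The divergence `∇ · F = ∂_1 F_1 + ∂_2 F_2 + ∂_3 F_3` of a vector field on `E3`. -/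
def div3 (F : E3 → E3) (x : E3) : ℝ :=
  pderiv3 F 0 x 0 + pderiv3 F 1 x 1 + pderiv3 F 2 x 2

@[simp] lemma vec3_apply0 (a b c : ℝ) : vec3 a b c 0 = a := by simp [vec3]
@[simp] lemma vec3_apply1 (a b c : ℝ) : vec3 a b c 1 = b := by simp [vec3]
@[simp] lemma vec3_apply2 (a b c : ℝ) : vec3 a b c 2 = c := by simp [vec3]

lemma E3ext {a b : E3} (h0 : a 0 = b 0) (h1 : a 1 = b 1) (h2 : a 2 = b 2) : a = b := by
  ext i; fin_cases i <;> assumption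

@[simp] lemma cross3_apply0 (a b : E3) : cross3 a b 0 = a 1 * b 2 - a 2 * b 1 := by simp [cross3]
@[simp] lemma cross3_apply1 (a b : E3) : cross3 a b 1 = a 2 * b 0 - a 0 * b 2 := by simp [cross3]
@[simp] lemma cross3_apply2 (a b : E3) : cross3 a b 2 = a 0 * b 1 - a 1 * b 0 := by simp [cross3]

def crossCLM (w : E3) : E3 →L[ℝ] E3 :=
  LinearMap.toContinuousLinearMap
  { toFun := fun x => cross3 w x
    map_add' := by intro x y; apply E3ext <;> simp <;> ring
    map_smul' := by intro c x; apply E3ext <;> simp <;> ring }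

@[simp] lemma crossCLM_apply (w x : E3) : crossCLM w x = cross3 w x := rfl

lemma hasDerivAt_E3 {h : ℝ → E3} {h' : E3} {t : ℝ}
    (h0 : HasDerivAt (fun s => h s 0) (h' 0) t)
    (h1 : HasDerivAt (fun s => h s 1) (h' 1) t)
    (h2 : HasDerivAt (fun s => h s 2) (h' 2) t) : HasDerivAt h h' t := by
  let e := PiLp.continuousLinearEquiv 2 ℝ (fun _ : Fin 3 => ℝ)
  have hp : HasDerivAt (fun s => e (h s)) (e h') t := by
    apply hasDerivAt_pi.2
    intro i; fin_cases i <;> [exact h0; exact h1; exact h2]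
  have hc := (e.symm.hasFDerivAt).comp_hasDerivAt t hp
  simpa [Function.comp_def] using hc

lemma hasDerivAt_coord {h : ℝ → E3} {h' : E3} {t : ℝ} (hh : HasDerivAt h h' t) (i : Fin 3) :
    HasDerivAt (fun s => h s i) (h' i) t := by
  simpa [Function.comp_def] using (EuclideanSpace.proj i).hasFDerivAt.comp_hasDerivAt t hh

lemma HasDerivAt.cross3' {f g : ℝ → E3} {f' g' : E3} {t : ℝ}
    (hf : HasDerivAt f f' t) (hg : HasDerivAt g g' t) :
    HasDerivAt (fun s => cross3 (f s) (g s)) (cross3 f' (g t) + cross3 (f t) g') t := by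
  have c := fun i => hasDerivAt_coord hf i
  have d := fun i => hasDerivAt_coord hg i
  apply hasDerivAt_E3
  · have := ((c 1).fun_mul (d 2)).fun_sub ((c 2).fun_mul (d 1))
    refine this.congr_deriv ?_
    simp only [PiLp.add_apply, WithLp.ofLp_add, Pi.add_apply, cross3_apply0]; ring
  · have := ((c 2).fun_mul (d 0)).fun_sub ((c 0).fun_mul (d 2))
    refine this.congr_deriv ?_
    simp only [PiLp.add_apply, WithLp.ofLp_add, Pi.add_apply, cross3_apply1]; ring
  · have := ((c 0).fun_mul (d 1)).fun_sub ((c 1).fun_mul (d 0))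
    refine this.congr_deriv ?_
    simp only [PiLp.add_apply, WithLp.ofLp_add, Pi.add_apply, cross3_apply2]; ring

lemma gradient_coord (f : E3 → ℝ) (x : E3) (i : Fin 3) :
    gradient f x i = fderiv ℝ f x (EuclideanSpace.single i 1) := by
  have h : ⟪gradient f x, EuclideanSpace.single i 1⟫ = fderiv ℝ f x (EuclideanSpace.single i 1) :=
    InnerProductSpace.toDual_symm_apply
  rw [← h, EuclideanSpace.inner_single_right]
  simp


/-- For the vector potential `A = m v_τ` and scalar potential
`φ = ‖A‖²/(2m)`, with `E = ∇ₓφ − ∂A/∂t` and `B = ∇ × A(t,·)`, the Lorentz-type force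
`E + v × B` equals the sum of the dragging force `−m a_τ` and the Coriolis force
`−2m ω × v`. -/
theorem apparent_forces_from_generalized_potential (m : ℝ) (hm : 0 < m) (O vO ω : ℝ → E3)
    (hO : Differentiable ℝ O) (hvO : Differentiable ℝ vO) (hω : Differentiable ℝ ω)
    (hO' : ∀ t, deriv O t = vO t)
    (A : ℝ → E3 → E3) (hA : ∀ t x, A t x = m • (vO t + cross3 (ω t) (x - O t)))
    (φ : ℝ → E3 → ℝ) (hφ : ∀ t x, φ t x = ‖A t x‖ ^ 2 / (2 * m))
    (Efld : ℝ → E3 → E3)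
    (hE : ∀ t x, Efld t x = gradient (φ t) x - deriv (fun s => A s x) t)
    (Bfld : ℝ → E3 → E3)
    (hB : ∀ t x, Bfld t x = curl3 (A t) x)
    (t : ℝ) (x : E3) (v : E3) :
    Efld t x + cross3 v (Bfld t x)
      = -(m • (deriv vO t + cross3 (deriv ω t) (x - O t)
            + cross3 (ω t) (cross3 (ω t) (x - O t))))
        - (2 * m) • cross3 (ω t) v := by
  set w := ω t with hw
  -- spatial derivative of A t
  have hAfun : A t = fun y => (m • (vO t - cross3 w (O t))) + (m • crossCLM w) y := by
    funext y
    rw [hA]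
    apply E3ext <;> simp <;> ring
  have hfd : HasFDerivAt (A t) (m • crossCLM w) x := by
    rw [hAfun]
    exact ((m • crossCLM w).hasFDerivAt).const_add _
  -- B field
  have hBv : Bfld t x = (2 * m) • w := by
    rw [hB]
    unfold curl3 pderiv3
    rw [hfd.fderiv]
    apply E3ext <;> simp [EuclideanSpace.single_apply] <;> ring
  -- time derivative of A
  have hvO' : HasDerivAt vO (deriv vO t) t := (hvO t).hasDerivAt
  have hω' : HasDerivAt ω (deriv ω t) t := (hω t).hasDerivAt
  have hOd : HasDerivAt O (vO t) t := by
    have := (hO t).hasDerivAt; rwa [hO'] at this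
  have hy : HasDerivAt (fun s => x - O s) (-(vO t)) t := hOd.const_sub x
  have hAd : HasDerivAt (fun s => A s x)
      (m • (deriv vO t + (cross3 (deriv ω t) (x - O t) + cross3 w (-(vO t))))) t := by
    have hfun : (fun s => A s x) = fun s => m • (vO s + cross3 (ω s) (x - O s)) :=
      funext fun s => hA s x
    rw [hfun]
    exact (hvO'.add (hω'.cross3' hy)).const_smul m
  have hDv : deriv (fun s => A s x) t
      = m • (deriv vO t + (cross3 (deriv ω t) (x - O t) + cross3 w (-(vO t)))) := hAd.deriv
  -- gradient of φ t
  have hφeq : φ t = fun y => (2 * m)⁻¹ * ⟪A t y, A t y⟫ := by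
    funext y; rw [hφ, ← real_inner_self_eq_norm_sq, div_eq_inv_mul]
  have hφd := (hfd.inner ℝ hfd).const_mul ((2 * m)⁻¹)
  have hgrad : ∀ i, gradient (φ t) x i
      = (2 * m)⁻¹ * (⟪A t x, m • cross3 w (EuclideanSpace.single i 1)⟫
          + ⟪m • cross3 w (EuclideanSpace.single i 1), A t x⟫) := by
    intro i
    rw [gradient_coord, hφeq, hφd.fderiv]
    simp
  -- coordinates of A t x
  have hAc : ∀ i, A t x i = m * (vO t i + cross3 w (x - O t) i) := by
    intro i; rw [hA]; simp [hw, mul_add]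
  -- final assembly
  rw [hE, hBv, hDv]
  have hm' : m ≠ 0 := ne_of_gt hm
  apply E3ext <;>
    simp only [PiLp.add_apply, PiLp.sub_apply, PiLp.neg_apply, PiLp.smul_apply, smul_eq_mul,
      cross3_apply0, cross3_apply1, cross3_apply2, hgrad, hAc,
      PiLp.inner_apply, RCLike.inner_apply, conj_trivial, Fin.sum_univ_three,
      EuclideanSpace.single_apply] <;>
    simp only [Fin.reduceEq, reduceIte, Fin.isValue] <;> field_simp <;> ring
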